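/- For any nonempty family (I_α)_{α ∈ A} of S-complete invariant ideals on a group G, the intersection I = ⋂_{α ∈ A} I_α is an S-complete invariant ideal on G. -/

import Mathlib

open scoped Pointwise Topology

/-- A subset `A` of a group `G` is *large* if `F * A = G` for some finite `F ⊆ G`. -/
def IsLarge {G : Type*} [Group G] (A : Set G) : Prop :=
  ∃ F : Finset G, (F : Set G) * A = Set.univ

/-- A subset `A` of a group `G` is *small* if `B \ A` is large for every large `B ⊆ G`. -/
def IsSmallSet {G : Type*} [Group G] (A : Set G) : Prop :=
  ∀ B : Set G, IsLarge B → IsLarge (B \ A)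

/-- A translation-invariant ideal on a group `G`: a proper family of subsets of `G`
containing the empty set, closed under subsets, finite unions and left translations. -/
structure IsInvariantIdeal (G : Type*) [Group G] (I : Set (Set G)) : Prop where
  proper : I ≠ Set.univ
  empty_mem : ∅ ∈ I
  subset_mem : ∀ ⦃A B : Set G⦄, A ∈ I → B ⊆ A → B ∈ I
  union_mem : ∀ ⦃A B : Set G⦄, A ∈ I → B ∈ I → A ∪ B ∈ I
  translate_mem : ∀ (x : G) ⦃A : Set G⦄, A ∈ I → (fun a => x * a) '' A ∈ I

/-- A subset `A ⊆ G` is `I`-large if `G \ FA ∈ I` for some finite `F ⊆ G`. -/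
def IsILarge {G : Type*} [Group G] (I : Set (Set G)) (A : Set G) : Prop :=
  ∃ F : Finset G, (Set.univ : Set G) \ ((F : Set G) * A) ∈ I

/-- A subset `A ⊆ G` is `I`-small if `L \ A` is `I`-large for every `I`-large `L ⊆ G`. -/
def IsISmall {G : Type*} [Group G] (I : Set (Set G)) (A : Set G) : Prop :=
  ∀ L : Set G, IsILarge I L → IsILarge I (L \ A)

/-- An invariant ideal is closed under left multiplication by finite sets. -/
lemma finsetMul_mem {G : Type*} [Group G] {I : Set (Set G)} (hI : IsInvariantIdeal G I)
    (F : Finset G) {M : Set G} (hM : M ∈ I) : (F : Set G) * M ∈ I := by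
  classical
  induction F using Finset.induction_on with
  | empty => simpa using hI.empty_mem
  | @insert a s ha ih =>
    rw [Finset.coe_insert, Set.insert_eq, Set.union_mul, Set.singleton_mul]
    exact hI.union_mem (hI.translate_mem a hM) ih

/-- The intersection of a nonempty family of `S`-complete invariant ideals on a group `G`
is an `S`-complete invariant ideal on `G`. -/
theorem iInter_sComplete {G : Type*} [Group G] {ι : Type*} [Nonempty ι]
    (I : ι → Set (Set G)) (hI : ∀ i, IsInvariantIdeal G (I i))
    (hc : ∀ i, {A : Set G | IsISmall (I i) A} = I i) :
    IsInvariantIdeal G (⋂ i, I i) ∧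
    {A : Set G | IsISmall (⋂ i, I i) A} = ⋂ i, I i := by
  classical
  obtain ⟨i₀⟩ := ‹Nonempty ι›
  have hJ : IsInvariantIdeal G (⋂ i, I i) := by
    constructor
    · intro h
      obtain ⟨A, hA⟩ := (Set.ne_univ_iff_exists_notMem _).mp (hI i₀).proper
      have : A ∈ ⋂ i, I i := h ▸ Set.mem_univ A
      exact hA (Set.mem_iInter.mp this i₀)
    · exact Set.mem_iInter.mpr fun i => (hI i).empty_mem
    · intro A B hA hAB
      exact Set.mem_iInter.mpr fun i => (hI i).subset_mem (Set.mem_iInter.mp hA i) hAB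
    · intro A B hA hB
      exact Set.mem_iInter.mpr fun i =>
        (hI i).union_mem (Set.mem_iInter.mp hA i) (Set.mem_iInter.mp hB i)
    · intro x A hA
      exact Set.mem_iInter.mpr fun i => (hI i).translate_mem x (Set.mem_iInter.mp hA i)
  refine ⟨hJ, ?_⟩
  ext A
  simp only [Set.mem_setOf_eq, Set.mem_iInter]
  constructor
  · -- forward: A is J-small → A ∈ I i for each i
    intro hS i
    rw [← hc i]
    intro L hL
    obtain ⟨F, hFL⟩ := hL
    set M : Set G := Set.univ \ ((F : Set G) * L) with hMdef
    -- L ∪ M is J-large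
    have hlarge : IsILarge (⋂ i, I i) (L ∪ M) := by
      refine ⟨insert 1 F, ?_⟩
      have hempty : (Set.univ : Set G) \ (((insert (1:G) F : Finset G) : Set G) * (L ∪ M)) = ∅ := by
        ext x
        simp only [Set.mem_diff, Set.mem_univ, true_and, Set.mem_empty_iff_false, iff_false,
          not_not]
        by_cases hx : x ∈ (F : Set G) * L
        · obtain ⟨f, hf, l, hl, rfl⟩ := hx
          exact ⟨f, by simp [hf], l, Or.inl hl, rfl⟩
        · exact ⟨1, by simp, x, Or.inr ⟨Set.mem_univ x, hx⟩, one_mul x⟩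
      rw [hempty]
      exact hJ.empty_mem
    obtain ⟨F'', hF''⟩ := hS (L ∪ M) hlarge
    refine ⟨F'', ?_⟩
    have hMi : M ∈ I i := hFL
    have hsub : (Set.univ : Set G) \ ((F'' : Set G) * (L \ A)) ⊆
        ((Set.univ : Set G) \ ((F'' : Set G) * ((L ∪ M) \ A))) ∪ ((F'' : Set G) * M) := by
      intro x ⟨_, hx⟩
      by_cases hxM : x ∈ (F'' : Set G) * M
      · exact Or.inr hxM
      · refine Or.inl ⟨Set.mem_univ x, ?_⟩
        rintro ⟨f, hf, l, ⟨hl | hl, hlA⟩, rfl⟩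
        · exact hx ⟨f, hf, l, ⟨hl, hlA⟩, rfl⟩
        · exact hxM ⟨f, hf, l, hl, rfl⟩
    exact (hI i).subset_mem
      ((hI i).union_mem (Set.mem_iInter.mp hF'' i) (finsetMul_mem (hI i) F'' hMi)) hsub
  · -- backward: A ∈ J → A is J-small
    intro hA L hL
    obtain ⟨F, hFL⟩ := hL
    refine ⟨F, ?_⟩
    have hsub : (Set.univ : Set G) \ ((F : Set G) * (L \ A)) ⊆
        ((Set.univ : Set G) \ ((F : Set G) * L)) ∪ ((F : Set G) * A) := by
      intro x ⟨_, hx⟩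
      by_cases hxA : x ∈ (F : Set G) * A
      · exact Or.inr hxA
      · refine Or.inl ⟨Set.mem_univ x, ?_⟩
        rintro ⟨f, hf, l, hl, rfl⟩
        exact hx ⟨f, hf, l, ⟨hl, fun hlA => hxA ⟨f, hf, l, hlA, rfl⟩⟩, rfl⟩
    refine Set.mem_iInter.mpr fun i => (hI i).subset_mem
      ((hI i).union_mem (Set.mem_iInter.mp hFL i)
        (finsetMul_mem (hI i) F (hA i))) hsub
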